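/- Let (W,w) be a Riesz fusion basis for W and (V,v) a Riesz fusion basis for V, where H = V ⊕ W⊥. Then the operator T*_{V,v} T_{W,w} : K_W → K_V is bijective. -/

import Mathlib

open scoped InnerProductSpace
open ContinuousLinearMap

set_option maxHeartbeats 1000000 in
/-- If `(W_i,w_i)` is a Riesz fusion basis for `W` and `(V_i,v_i)` a Riesz fusion basis
for `V`, where `H = V ⊕ Wᗮ`, then `T_V* T_W : K_W → K_V` is bijective. -/
theorem analysis_comp_synthesis_bijective_of_riesz_fusion_bases
    {H : Type*} [NormedAddCommGroup H] [InnerProductSpace ℂ H] [CompleteSpace H]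
    {I : Type*} (V W : Submodule ℂ H) [CompleteSpace V] [CompleteSpace W]
    (hcompl : IsCompl V Wᗮ)
    (Wi Vi : I → Submodule ℂ H) [∀ i, CompleteSpace (Wi i)] [∀ i, CompleteSpace (Vi i)]
    (hWiW : ∀ i, Wi i ≤ W) (hViV : ∀ i, Vi i ≤ V)
    (w v : I → ℝ) (hw : ∀ i, 0 < w i) (hv : ∀ i, 0 < v i)
    (TW : lp (fun i => Wi i) 2 →L[ℂ] H)
    (hTW : ∀ c, HasSum (fun i => w i • (c i : H)) (TW c))
    (hTWinj : Function.Injective TW) (hTWrange : LinearMap.range TW.toLinearMap = W)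
    (TV : lp (fun i => Vi i) 2 →L[ℂ] H)
    (hTV : ∀ c, HasSum (fun i => v i • (c i : H)) (TV c))
    (hTVinj : Function.Injective TV) (hTVrange : LinearMap.range TV.toLinearMap = V) :
    Function.Bijective (TV.adjoint.comp TW) := by
  classical
  have hVc : IsClosed (V : Set H) :=
    (completeSpace_coe_iff_isComplete.mp ‹CompleteSpace V›).isClosed
  have hWoc : IsClosed ((Wᗮ : Submodule ℂ H) : Set H) := W.isClosed_orthogonal
  -- the (continuous) projection onto `V` along `Wᗮ`
  set P : H →L[ℂ] H :=
    V.subtypeL.comp (V.linearProjOfClosedCompl Wᗮ hcompl hVc hWoc) with hP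
  have hPapp : ∀ x : H, P x = (V.linearProjOfIsCompl Wᗮ hcompl x : H) := by
    intro x
    simp [hP, Submodule.coe_continuous_linearProjOfClosedCompl']
    rfl
  have hPV : ∀ x : H, P x ∈ V := by
    intro x; rw [hPapp]; exact (V.linearProjOfIsCompl Wᗮ hcompl x).2
  have hPleft : ∀ x : H, x ∈ V → P x = x := by
    intro x hx
    rw [hPapp]
    exact congrArg _ (Submodule.linearProjOfIsCompl_apply_left hcompl ⟨x, hx⟩)
  have hPright : ∀ x : H, x ∈ Wᗮ → P x = 0 := by
    intro x hx
    rw [hPapp]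
    exact congrArg Subtype.val (Submodule.linearProjOfIsCompl_apply_right' hcompl hx)
  have hsub : ∀ x : H, x - P x ∈ Wᗮ := by
    intro x
    have h := Submodule.projection_add_projection_eq_self hcompl x
    have : x - P x = (Wᗮ.linearProjOfIsCompl V hcompl.symm x : H) := by
      rw [hPapp]; exact sub_eq_of_eq_add' h.symm
    rw [this]; exact (Wᗮ.linearProjOfIsCompl V hcompl.symm x).2
  -- the adjoint of `P`
  have hPaW : ∀ x : H, P.adjoint x ∈ W := by
    intro x
    rw [← W.orthogonal_orthogonal, Submodule.mem_orthogonal]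
    intro q hq
    rw [← inner_conj_symm, ContinuousLinearMap.adjoint_inner_left, hPright q hq,
      inner_zero_right, map_zero]
  have hPaVperp : ∀ x : H, x - P.adjoint x ∈ Vᗮ := by
    intro x
    rw [Submodule.mem_orthogonal]
    intro u hu
    rw [inner_sub_right, ContinuousLinearMap.adjoint_inner_right, hPleft u hu, sub_self]
  have hTVmem : ∀ c, TV c ∈ V := by
    intro c; rw [← hTVrange]; exact ⟨c, rfl⟩
  -- injectivity
  have key : ∀ c, TV.adjoint (TW c) = 0 → c = 0 := by
    intro c hc
    have hx : TW c ∈ Vᗮ := by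
      rw [Submodule.mem_orthogonal]
      intro u hu
      rw [← hTVrange] at hu
      obtain ⟨e, rfl⟩ := hu
      rw [ContinuousLinearMap.coe_coe, ← ContinuousLinearMap.adjoint_inner_right, hc, inner_zero_right]
    have hxW : TW c ∈ W := by rw [← hTWrange]; exact ⟨c, rfl⟩
    have hzero : TW c = 0 := by
      rw [← inner_self_eq_zero (𝕜 := ℂ) (x := TW c)]
      have hdecomp : TW c = P (TW c) + (TW c - P (TW c)) := by abel
      nth_rewrite 2 [hdecomp]
      rw [inner_add_right,
        (Submodule.mem_orthogonal' V (TW c)).mp hx (P (TW c)) (hPV _),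
        (Submodule.mem_orthogonal W _).mp (hsub (TW c)) (TW c) hxW, add_zero]
    exact hTWinj (by rw [hzero, map_zero])
  constructor
  · intro c c' hcc'
    have h0 : TV.adjoint (TW (c - c')) = 0 := by
      rw [map_sub, map_sub, sub_eq_zero]
      exact hcc'
    exact sub_eq_zero.mp (key _ h0)
  · -- surjectivity
    intro d
    set TV' : lp (fun i => Vi i) 2 →L[ℂ] V := TV.codRestrict V hTVmem with hTV'
    have hker : LinearMap.ker TV'.toLinearMap = ⊥ := by
      ext c
      simp only [LinearMap.mem_ker, Submodule.mem_bot]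
      constructor
      · intro h
        apply hTVinj
        rw [map_zero]
        have : ((TV' c : V) : H) = ((0 : V) : H) := congrArg Subtype.val h
        rwa [ContinuousLinearMap.coe_codRestrict_apply, Submodule.coe_zero] at this
      · intro h; rw [h, map_zero]
    have hrange : LinearMap.range TV'.toLinearMap = ⊤ := by
      rw [LinearMap.range_eq_top]
      rintro ⟨u, hu⟩
      rw [← hTVrange] at hu
      obtain ⟨e, he⟩ := hu
      exact ⟨e, Subtype.ext he⟩
    set E := ContinuousLinearEquiv.ofBijective TV' hker hrange with hE
    set y : V := ContinuousLinearMap.adjoint (E.symm : V →L[ℂ] lp (fun i => Vi i) 2) d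
      with hy
    have hadj : ∀ z : V, TV.adjoint (z : H)
        = ContinuousLinearMap.adjoint (E : lp (fun i => Vi i) 2 →L[ℂ] V) z := by
      intro z
      apply ext_inner_right ℂ
      intro c
      rw [ContinuousLinearMap.adjoint_inner_left, ContinuousLinearMap.adjoint_inner_left]
      have hEc : ((E : lp (fun i => Vi i) 2 →L[ℂ] V) c : H) = TV c := by
        rw [ContinuousLinearEquiv.coe_coe, hE, ContinuousLinearEquiv.coeFn_ofBijective,
          ContinuousLinearMap.coe_codRestrict_apply]
      rw [Submodule.coe_inner, hEc]
    have hid : ((E.symm : V →L[ℂ] lp (fun i => Vi i) 2).comp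
        (E : lp (fun i => Vi i) 2 →L[ℂ] V))
        = ContinuousLinearMap.id ℂ (lp (fun i => Vi i) 2) := by
      ext c : 1
      simp only [ContinuousLinearMap.coe_comp', Function.comp_apply,
        ContinuousLinearEquiv.coe_coe, ContinuousLinearMap.id_apply]
      exact E.symm_apply_apply c
    have hEadj : ContinuousLinearMap.adjoint (E : lp (fun i => Vi i) 2 →L[ℂ] V) y = d := by
      rw [hy, ← ContinuousLinearMap.comp_apply, ← ContinuousLinearMap.adjoint_comp, hid,
        ContinuousLinearMap.adjoint_id, ContinuousLinearMap.id_apply]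
    have hTVay : TV.adjoint (y : H) = d := (hadj y).trans hEadj
    have hWmem : P.adjoint (y : H) ∈ W := hPaW _
    rw [← hTWrange] at hWmem
    obtain ⟨c, hc⟩ := hWmem
    refine ⟨c, ?_⟩
    have h0 : TV.adjoint ((y : H) - P.adjoint (y : H)) = 0 := by
      rw [← inner_self_eq_zero (𝕜 := ℂ)]
      rw [ContinuousLinearMap.adjoint_inner_left]
      exact (Submodule.mem_orthogonal' V _).mp (hPaVperp (y : H)) _ (hTVmem _)
    calc (TV.adjoint.comp TW) c = TV.adjoint (P.adjoint (y : H)) := by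
          rw [ContinuousLinearMap.comp_apply, ← ContinuousLinearMap.coe_coe TW, hc]
      _ = TV.adjoint (y : H) - TV.adjoint ((y : H) - P.adjoint (y : H)) := by
          rw [← map_sub, sub_sub_cancel]
      _ = d := by rw [hTVay, h0, sub_zero]
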